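/- Let ε > 0 and suppose S ∈ L²(-1,1), T, U ∈ W^{1,2}_0(-1,1). Define c₁ := (∫_{-1}^1 e^{4U}(1+ε−x²) dx)^{1/2}, c₂ := ∫_{-1}^1 S T dx, c₃ := (1/√2)∫_{-1}^1 S dx, M₁ := max{0, 4 − c₃⁴}, M₂ := max{0, (√M₁ − 2|c₂|)/c₁}, and I_ε[S,T,U] := (1/2)∫_{-1}^1 [U'²(1+ε−x²) − 2xU' + (S² + T'²)e^{-2U}] dx + M₂²/2. Then I_ε[S,T,U] ≥ −(1/2)∫_{-1}^1 x²/(1+ε−x²) dx; in particular I_ε is bounded below on L²×W^{1,2}_0×W^{1,2}_0. -/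
import Mathlib


open Real Set MeasureTheory intervalIntegral

/-- With `S ∈ L²(-1,1)`, `T, U ∈ W^{1,2}_0(-1,1)` and the auxiliary
quantities c₁, c₂, c₃, M₁, M₂ of the paper, the functional I_ε is bounded below by
−(1/2)∫_{-1}^1 x²/(1+ε−x²) dx. -/
theorem stmt_2 (ε : ℝ) (hε : 0 < ε) (S T T' U U' : ℝ → ℝ)
    (hS : IntervalIntegrable (fun x => (S x)^2) volume (-1) 1)
    (hT : ∀ x ∈ Icc (-1:ℝ) 1, HasDerivAt T (T' x) x)
    (hT' : IntervalIntegrable (fun x => (T' x)^2) volume (-1) 1)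
    (hTb : T (-1) = 0 ∧ T 1 = 0)
    (hU : ∀ x ∈ Icc (-1:ℝ) 1, HasDerivAt U (U' x) x)
    (hU' : IntervalIntegrable (fun x => (U' x)^2) volume (-1) 1)
    (hUb : U (-1) = 0 ∧ U 1 = 0)
    (c₁ c₂ c₃ M₁ M₂ Iε : ℝ)
    (hc₁ : c₁ = Real.sqrt (∫ x in (-1:ℝ)..1, Real.exp (4 * U x) * (1 + ε - x^2)))
    (hc₂ : c₂ = ∫ x in (-1:ℝ)..1, S x * T x)
    (hc₃ : c₃ = (1 / Real.sqrt 2) * ∫ x in (-1:ℝ)..1, S x)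
    (hM₁ : M₁ = max 0 (4 - c₃^4))
    (hM₂ : M₂ = max 0 ((Real.sqrt M₁ - 2 * |c₂|) / c₁))
    (hIε : Iε = (1/2) * (∫ x in (-1:ℝ)..1,
        ((U' x)^2 * (1 + ε - x^2) - 2 * x * U' x
          + ((S x)^2 + (T' x)^2) * Real.exp (-2 * U x))) + M₂^2 / 2) :
    Iε ≥ -(1/2) * ∫ x in (-1:ℝ)..1, x^2 / (1 + ε - x^2) := by
  have ha : ∀ x ∈ Icc (-1:ℝ) 1, 0 < 1 + ε - x^2 := by
    intro x hx
    nlinarith [hx.1, hx.2]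
  -- the right-hand integrand is nonnegative
  have hRnonneg : 0 ≤ ∫ x in (-1:ℝ)..1, x^2 / (1 + ε - x^2) := by
    apply intervalIntegral.integral_nonneg (by norm_num : (-1:ℝ) ≤ 1)
    intro x hx
    exact div_nonneg (sq_nonneg x) (le_of_lt (ha x hx))
  have hM₂nonneg : 0 ≤ M₂ := by rw [hM₂]; exact le_max_left _ _
  have hM2sq : 0 ≤ M₂^2 / 2 := by positivity
  set F : ℝ → ℝ := fun x => (U' x)^2 * (1 + ε - x^2) - 2 * x * U' x
      + ((S x)^2 + (T' x)^2) * Real.exp (-2 * U x) with hF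
  by_cases hint : IntervalIntegrable F volume (-1) 1
  · -- pointwise bound
    have hpt : ∀ x ∈ Icc (-1:ℝ) 1, -(x^2) / (1 + ε - x^2) ≤ F x := by
      intro x hx
      have hax := ha x hx
      simp only [hF]
      rw [div_le_iff₀ hax]
      have h1 := sq_nonneg (U' x * (1 + ε - x^2) - x)
      have h2 : 0 ≤ ((S x)^2 + (T' x)^2) * Real.exp (-2 * U x) :=
        mul_nonneg (by positivity) (Real.exp_pos _).le
      nlinarith
    have hg : IntervalIntegrable (fun x => -(x^2) / (1 + ε - x^2)) volume (-1) 1 := by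
      apply ContinuousOn.intervalIntegrable
      apply ContinuousOn.div
      · fun_prop
      · fun_prop
      · intro x hx
        rw [uIcc_of_le (by norm_num : (-1:ℝ) ≤ 1)] at hx
        exact ne_of_gt (ha x hx)
    have hmono := intervalIntegral.integral_mono_on (by norm_num : (-1:ℝ) ≤ 1) hg hint hpt
    have hneg : (∫ x in (-1:ℝ)..1, -(x^2) / (1 + ε - x^2))
        = -∫ x in (-1:ℝ)..1, x^2 / (1 + ε - x^2) := by
      rw [← intervalIntegral.integral_neg]
      congr 1; ext x; ring
    rw [hneg] at hmono
    rw [hIε]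
    nlinarith
  · rw [hIε, intervalIntegral.integral_undef hint]
    nlinarith
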